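/- arXiv:1510.01416 — 10 statements merged into one kernel-verified Lean document; each statement's English description precedes it below -/
import Mathlib

section
/- Let F[ℓ,m,n] be a rotational word with 2 ≤ ℓ ≤ n−1. Then flipping the symbol at index 0 of F[ℓ,m,n] yields the (−d)-th cyclic shift of F[ℓ−1,m,n], i.e., F[ℓ,m,n]^{\overline{0}}_i = F[ℓ−1,m,n]_{(i−d) mod n} for all i. -/
/-- Rotational word `F[ℓ,m,n]`: `true` encodes the symbol `L`. -/
def Fword (ℓ m n i : ℕ) : Bool := decide (i * m % n < ℓ)

theorem stmt3 (ℓ m n d : ℕ) (hℓ : 2 ≤ ℓ) (hℓn : ℓ < n) (hmn : m < n)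
    (hgcd : Nat.gcd m n = 1) (hd : d < n) (hdinv : m * d % n = 1) :
    ∀ i, i < n →
      (if i = 0 then !(Fword ℓ m n i) else Fword ℓ m n i)
        = Fword (ℓ - 1) m n ((i + (n - d)) % n) := by
  intro i hi
  have hn : 2 < n := lt_of_le_of_lt hℓ hℓn
  have hm : 0 < m := by
    rcases Nat.eq_zero_or_pos m with h | h
    · subst h; simp at hdinv
    · exact h
  have hdm : d * m % n = 1 := by rwa [Nat.mul_comm]
  have hdk : d * m = n * (d * m / n) + 1 := by
    have := Nat.div_add_mod (d * m) n; omega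
  set k := d * m / n with hk
  have hkm : k + 1 ≤ m := by
    by_contra h
    push_neg at h
    have h1 : m ≤ k := by omega
    have h2 : n * m ≤ n * k := Nat.mul_le_mul_left n h1
    have h3 : d * m < n * m := Nat.mul_lt_mul_of_lt_of_le hd (le_refl m) hm
    omega
  -- key: ((n - d) * m) % n = n - 1
  have hsub : (n - d) * m + d * m = n * m := by
    rw [← Nat.add_mul, Nat.sub_add_cancel (le_of_lt hd)]
  have he1 : n * (m - k - 1) + n * (k + 1) = n * m := by
    rw [← Nat.mul_add]; congr 1; omega
  have he3 : n * (k + 1) = n * k + n := by ring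
  have hX : (n - d) * m = n * (m - k - 1) + (n - 1) := by omega
  have h2 : (n - d) * m % n = n - 1 := by
    rw [hX, Nat.mul_add_mod, Nat.mod_eq_of_lt (show n - 1 < n by omega)]
  have hr : i * m % n < n := Nat.mod_lt _ (by omega)
  have hA : ((i + (n - d)) % n) * m % n = (i * m % n + (n - 1)) % n := by
    rw [Nat.mod_mul_mod, Nat.add_mul, Nat.add_mod, h2]
  by_cases hi0 : i = 0
  · subst hi0
    have hA0 : ((0 + (n - d)) % n) * m % n = n - 1 := by
      rw [hA, Nat.zero_mul, Nat.zero_mod, Nat.zero_add,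
          Nat.mod_eq_of_lt (show n - 1 < n by omega)]
    rw [if_pos rfl]
    simp only [Fword, hA0, Nat.zero_mul, Nat.zero_mod]
    rw [decide_eq_true (show (0:ℕ) < ℓ by omega),
        decide_eq_false (show ¬ (n - 1 < ℓ - 1) by omega)]
    rfl
  · have hr1 : 1 ≤ i * m % n := by
      rcases Nat.eq_zero_or_pos (i * m % n) with h | h
      · exfalso
        have hdvd : n ∣ i * m := Nat.dvd_of_mod_eq_zero h
        have hco : Nat.Coprime n m := Nat.coprime_comm.mp hgcd
        have hni : n ∣ i := hco.dvd_of_dvd_mul_right hdvd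
        have := Nat.le_of_dvd (by omega) hni
        omega
      · exact h
    have hA1 : ((i + (n - d)) % n) * m % n = i * m % n - 1 := by
      rw [hA, show i * m % n + (n - 1) = (i * m % n - 1) + n by omega,
          Nat.add_mod_right, Nat.mod_eq_of_lt (show i * m % n - 1 < n by omega)]
    rw [if_neg hi0]
    simp only [Fword, hA1]
    rw [decide_eq_decide]
    omega
end

section
/- Let F[ℓ,m,n] be a rotational word with 2 ≤ ℓ ≤ n−2 and d the multiplicative inverse of m mod n. Then flipping the symbols of F[ℓ,m,n] at both index 0 and index ℓ·d mod n, followed by the d-th left cyclic shift, recovers F[ℓ,m,n]: that is, F[ℓ,m,n]^{\overline{0}\,\overline{ℓd}\,(d)} = F[ℓ,m,n]. -/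
theorem stmt4 (ℓ m n d : ℕ) (hℓ : 2 ≤ ℓ) (hℓn : ℓ + 2 ≤ n) (hmn : m < n)
    (hgcd : Nat.gcd m n = 1) (hd : d < n) (hdinv : m * d % n = 1) :
    ∀ i, i < n →
      (if (i + d) % n = 0 ∨ (i + d) % n = ℓ * d % n
        then !(Fword ℓ m n ((i + d) % n))
        else Fword ℓ m n ((i + d) % n))
      = Fword ℓ m n i := by
  intro i hi
  have hn : 0 < n := by omega
  have hdm : d * m % n = 1 := by rwa [mul_comm]
  have inv : ∀ x, x < n → (x * m % n) * d % n = x := by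
    intro x hx
    rw [Nat.mod_mul_mod, mul_assoc, Nat.mul_mod x (m * d) n, hdinv, mul_one,
      Nat.mod_mod_of_dvd x dvd_rfl, Nat.mod_eq_of_lt hx]
  set j := (i + d) % n with hj
  have hjn : j < n := Nat.mod_lt _ hn
  have key : j * m % n = (i * m % n + 1) % n := by
    rw [hj, Nat.mod_mul_mod, add_mul, Nat.add_mod, hdm]
  have hld : (ℓ * d % n) * m % n = ℓ := by
    rw [Nat.mod_mul_mod, mul_assoc, Nat.mul_mod ℓ (d * m) n, hdm, mul_one,
      Nat.mod_mod_of_dvd ℓ dvd_rfl, Nat.mod_eq_of_lt (by omega)]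
  set a := i * m % n with hA
  have ha : a < n := Nat.mod_lt _ hn
  have e0 : (j = 0) ↔ (a + 1) % n = 0 := by
    constructor
    · intro h; rw [← key, h, Nat.zero_mul, Nat.zero_mod]
    · intro h
      have hx := inv j hjn
      rw [key, h] at hx
      simpa using hx.symm
  have eL : (j = ℓ * d % n) ↔ (a + 1) % n = ℓ := by
    constructor
    · intro h; rw [← key, h, hld]
    · intro h
      have hx := inv j hjn
      rw [key, h] at hx
      exact hx.symm
  simp only [Fword, key, e0, eL]
  by_cases hA1 : a + 1 = n
  · have hb : (a + 1) % n = 0 := by rw [hA1, Nat.mod_self]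
    rw [hb]
    have h1 : ¬ a < ℓ := by omega
    simp [h1, show 0 < ℓ by omega]
    exact Nat.le_of_not_lt h1
  · have hb : (a + 1) % n = a + 1 := Nat.mod_eq_of_lt (by omega)
    rw [hb]
    by_cases hB : a + 1 = ℓ
    · simp [hB, show a < ℓ by omega]
      exact show a < ℓ by omega
    · have hc : ¬ (a + 1 = 0 ∨ a + 1 = ℓ) := by omega
      rw [if_neg hc]
      simp only [decide_eq_decide]
      omega
end

section
/- Let S: {0,…,n−1} → {L,R} be a word of length n with S_0 = L, and suppose there exist α, d with 1 ≤ α ≤ n−1, 1 ≤ d ≤ n−1, gcd(d,n)=1, such that flipping the symbols of S at indices 0 and α followed by the d-th left cyclic shift recovers S. Let m be the multiplicative inverse of d modulo n and ℓ = m·α mod n. Then S = F[ℓ,m,n] and α = ℓ·d mod n. -/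
theorem stmt5 (n : ℕ) (S : ℕ → Bool) (α d m ℓ : ℕ)
    (hn : 0 < n) (hS0 : S 0 = true)
    (hα : 1 ≤ α) (hαn : α ≤ n - 1) (hd1 : 1 ≤ d) (hdn : d ≤ n - 1)
    (hgcd : Nat.gcd d n = 1)
    (hm : m < n) (hminv : d * m % n = 1)
    (hℓ : ℓ = m * α % n)
    (hflipshift : ∀ i, i < n →
      (if (i + d) % n = 0 ∨ (i + d) % n = α
        then !(S ((i + d) % n))
        else S ((i + d) % n)) = S i) :
    (∀ i, i < n → S i = Fword ℓ m n i) ∧ α = ℓ * d % n := by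
  have hαlt : α < n := by omega
  have hcop : Nat.Coprime n d := Nat.coprime_comm.mp hgcd
  -- α = ℓ * d % n
  have hαeq : α = ℓ * d % n := by
    have h : (m * α % n * d) % n = α := by
      rw [Nat.mod_mul_mod]
      have he : m * α * d = α * (d * m) := by ring
      rw [he, Nat.mul_mod, hminv]
      simp [Nat.mod_eq_of_lt hαlt]
    rw [hℓ]; exact h.symm
  have hℓlt : ℓ < n := by rw [hℓ]; exact Nat.mod_lt _ hn
  have hℓpos : 0 < ℓ := by
    rcases Nat.eq_zero_or_pos ℓ with h0 | h0
    · rw [h0] at hαeq; simp at hαeq; omega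
    · exact h0
  -- j*d % n = 0 is impossible for 1 ≤ j < n
  have hnd0 : ∀ j, 1 ≤ j → j < n → (j * d) % n ≠ 0 := by
    intro j h1 h2 h0
    have hdvd : n ∣ j * d := Nat.dvd_of_mod_eq_zero h0
    have hdj : n ∣ j := hcop.dvd_of_dvd_mul_right hdvd
    have := Nat.le_of_dvd (by omega) hdj
    omega
  -- j*d % n = α forces j = ℓ
  have hjℓ : ∀ j, j < n → (j * d) % n = α → j = ℓ := by
    intro j hj hja
    have h1 : (j * d * m) % n = ℓ := by
      rw [← Nat.mod_mul_mod, hja, hℓ, Nat.mul_comm α m]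
    have h2 : (j * d * m) % n = j := by
      rw [Nat.mul_assoc, Nat.mul_mod, hminv]
      simp [Nat.mod_eq_of_lt hj]
    omega
  have key : ∀ k, k < n → S ((k * d) % n) = decide (k < ℓ) := by
    intro k
    induction k with
    | zero => intro _; simp [hS0, hℓpos]
    | succ k ih =>
      intro hk
      have hk' : k < n := by omega
      have hkd : (k * d) % n < n := Nat.mod_lt _ hn
      have h1 := hflipshift _ hkd
      have h2 : ((k * d) % n + d) % n = ((k + 1) * d) % n := by
        rw [Nat.mod_add_mod, Nat.succ_mul]
      rw [h2] at h1
      have ihv := ih hk'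
      by_cases hc : k + 1 = ℓ
      · have hcond : ((k + 1) * d) % n = α := by rw [hc]; exact hαeq.symm
        rw [if_pos (Or.inr hcond)] at h1
        have hkℓ : k < ℓ := by omega
        rw [ihv, decide_eq_true hkℓ, Bool.not_eq_true'] at h1
        rw [h1]
        have : ¬ (k + 1 < ℓ) := by omega
        simp [this]
      · have hc0 : ((k + 1) * d) % n ≠ 0 := hnd0 (k + 1) (by omega) hk
        have hcα : ((k + 1) * d) % n ≠ α := fun h => hc (hjℓ _ hk h)
        rw [if_neg (by push_neg; exact ⟨hc0, hcα⟩)] at h1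
        rw [h1, ihv]
        have : (k < ℓ) ↔ (k + 1 < ℓ) := by omega
        simp [this]
  refine ⟨?_, hαeq⟩
  intro i hi
  have hk : i * m % n < n := Nat.mod_lt _ hn
  have hkd : ((i * m % n) * d) % n = i := by
    rw [Nat.mod_mul_mod, Nat.mul_assoc, Nat.mul_comm m d, Nat.mul_mod, hminv]
    simp [Nat.mod_eq_of_lt hi]
  have h := key _ hk
  rw [hkd] at h
  simpa [Fword] using h
end

section
/- Let ℓ,m,n be positive integers with ℓ<n, m<n, gcd(m,n)=1, and let m⁺/n⁺ be the right Farey root of m/n (so m⁺·n − m·n⁺ = 1 and n⁺ + n⁻ = n where m⁻/n⁻ is the left Farey root). Let ℓ⁺ = ⌈ℓ·n⁺/n⌉. Then ℓ⁺ equals the number of indices i ∈ {0,…,n⁺−1} with i·m mod n < ℓ (i.e., the number of L's among the first n⁺ symbols of F[ℓ,m,n]). -/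
open Finset

private lemma myFilterCard (np : ℕ) (P : ℕ → Prop) [DecidablePred P] (j : ℕ)
    (h : ∀ i, i < np → (P i ↔ i = j)) :
    ((range np).filter P).card = if j < np then 1 else 0 := by
  split_ifs with hj
  · have he : (range np).filter P = {j} := by
      ext i
      simp only [mem_filter, mem_range, mem_singleton]
      constructor
      · rintro ⟨hi, hp⟩; exact (h i hi).1 hp
      · intro hij
        refine ⟨hij ▸ hj, (h i (hij ▸ hj)).2 hij⟩
    rw [he]; rfl
  · have he : (range np).filter P = ∅ := by
      ext i
      simp only [mem_filter, mem_range, notMem_empty, iff_false, not_and]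
      intro hi hp
      exact hj (((h i hi).1 hp) ▸ hi)
    rw [he]; rfl

private lemma mySplit (s : Finset ℕ) (P Q R : ℕ → Prop) [DecidablePred P] [DecidablePred Q]
    [DecidablePred R] (h : ∀ i, R i ↔ P i ∨ Q i) (hd : ∀ i, P i → Q i → False) :
    (s.filter R).card = (s.filter P).card + (s.filter Q).card := by
  have he : s.filter R = s.filter P ∪ s.filter Q := by
    ext i
    simp only [mem_filter, mem_union, h i, and_or_left]
  rw [he, Finset.card_union_of_disjoint]
  rw [Finset.disjoint_left]
  intro a ha hb
  simp only [mem_filter] at ha hb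
  exact hd a ha.2 hb.2

private lemma myAux (m n np nm : ℕ) (hnp : 0 < np) (hnpn : np < n)
    (hsum : np + nm = n) (hmm1 : m * nm % n = 1) :
    ∀ ℓ, ℓ ≤ n →
      ((range np).filter (fun t => t * n < ℓ * np)).card =
      ((range np).filter (fun i => i * m % n < ℓ)).card := by
  have hn : 0 < n := lt_trans hnp hnpn
  have key : ∀ a : ℕ, (a * m % n) * nm % n = a % n := by
    intro a
    rw [Nat.mod_mul_mod, mul_assoc, Nat.mul_mod, hmm1, mul_one,
      Nat.mod_mod_of_dvd _ (dvd_refl n)]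
  have key2 : ∀ a : ℕ, (a * nm % n) * m % n = a % n := by
    intro a
    rw [Nat.mod_mul_mod, mul_assoc, Nat.mul_mod, mul_comm nm m, hmm1, mul_one,
      Nat.mod_mod_of_dvd _ (dvd_refl n)]
  have hmul : ∀ a b : ℕ, a ≤ b ↔ a * n ≤ b * n := by
    intro a b
    exact ⟨fun h => Nat.mul_le_mul_right n h, fun h => Nat.le_of_mul_le_mul_right h hn⟩
  intro ℓ
  induction ℓ with
  | zero => intro _; simp
  | succ ℓ ih =>
    intro hℓ1
    have hℓn : ℓ < n := hℓ1
    have hR := mySplit (range np) (fun i => i * m % n < ℓ) (fun i => i * m % n = ℓ)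
      (fun i => i * m % n < ℓ + 1) (fun i => Nat.lt_succ_iff_lt_or_eq)
      (fun i h1 h2 => by omega)
    have hL := mySplit (range np) (fun t => t * n < ℓ * np)
      (fun t => ℓ * np ≤ t * n ∧ t * n < ℓ * np + np)
      (fun t => t * n < (ℓ + 1) * np)
      (fun t => by rw [Nat.succ_mul]; omega) (fun t h1 h2 => by omega)
    rw [hR, hL, ih (Nat.le_of_succ_le hℓ1)]
    congr 1
    -- now the "new element" counts
    obtain ⟨q, s, hdm, hsn, hsdef⟩ :
        ∃ q s, q * n + s = ℓ * np ∧ s < n ∧ s = ℓ * np % n :=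
      ⟨ℓ * np / n, ℓ * np % n, by rw [mul_comm]; exact Nat.div_add_mod _ _,
        Nat.mod_lt _ hn, rfl⟩
    have hlsum : ℓ * np + ℓ * nm = ℓ * n := by rw [← Nat.mul_add, hsum]
    have hiR : ((range np).filter (fun i => i * m % n = ℓ)).card =
        if ℓ * nm % n < np then 1 else 0 := by
      apply myFilterCard
      intro i hi
      constructor
      · intro hp
        have hk := key i
        rw [hp, Nat.mod_eq_of_lt (lt_trans hi hnpn)] at hk
        exact hk.symm
      · rintro rfl
        have hk := key2 ℓ
        rw [Nat.mod_eq_of_lt hℓn] at hk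
        exact hk
    rw [hiR]
    by_cases hs0 : s = 0
    · -- candidate t = q, i₀ = 0
      have hqℓ : q ≤ ℓ := by
        have h1 : ℓ * np ≤ ℓ * n := Nat.mul_le_mul_left ℓ (le_of_lt hnpn)
        have h2 := hmul q ℓ
        omega
      have hi0 : ℓ * nm % n = 0 := by
        have h2 : (ℓ - q) * n = ℓ * n - q * n := Nat.sub_mul _ _ _
        have h3 := hmul q ℓ
        have h1 : ℓ * nm = (ℓ - q) * n := by omega
        rw [h1]; exact Nat.mul_mod_left _ _
      have hqnp : q < np := by
        have h1 : ℓ * np < n * np := (Nat.mul_lt_mul_right hnp).2 hℓn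
        have h2 : np ≤ q ↔ np * n ≤ q * n := hmul np q
        have h3 : np * n = n * np := mul_comm _ _
        omega
      have hLc : ((range np).filter
          (fun t => ℓ * np ≤ t * n ∧ t * n < ℓ * np + np)).card =
          if q < np then 1 else 0 := by
        apply myFilterCard
        intro t ht
        have e1 := hmul t q
        have e2 := hmul q t
        have e4 := hmul (q + 1) t
        have e4' : (q + 1) * n = q * n + n := by ring
        omega
      rw [hLc, hi0, if_pos hqnp, if_pos hnp]
    · -- s > 0
      have hℓpos : 0 < ℓ := by
        rcases Nat.eq_zero_or_pos ℓ with rfl | h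
        · exfalso; apply hs0; rw [hsdef]; simp
        · exact h
      have hqℓ : q + 1 ≤ ℓ := by
        have h1 : ℓ * np ≤ ℓ * n := Nat.mul_le_mul_left ℓ (le_of_lt hnpn)
        have h2 := hmul ℓ q
        omega
      have hio : ℓ * nm % n = n - s := by
        have h2 : (ℓ - (q + 1)) * n = ℓ * n - (q + 1) * n := Nat.sub_mul _ _ _
        have h3 : (q + 1) * n = q * n + n := by ring
        have h4 := hmul (q + 1) ℓ
        have h1 : ℓ * nm = (n - s) + (ℓ - (q + 1)) * n := by omega
        rw [h1, Nat.add_mul_mod_self_right, Nat.mod_eq_of_lt (by omega)]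
      rw [hio]
      by_cases hcase : n - s < np
      · -- candidate t = q + 1
        have hq1np : q + 1 < np := by
          have h1 : ℓ * np ≤ (n - 1) * np := Nat.mul_le_mul_right np (by omega)
          have h2 : (n - 1) * np + np = n * np := by
            cases n with
            | zero => omega
            | succ k => simp [Nat.succ_sub_one, Nat.succ_mul]
          have h3 := hmul (q + 1) np
          have h3' := hmul np (q + 1)
          have h4 : (q + 1) * n = q * n + n := by ring
          have h5 : np * n = n * np := mul_comm _ _
          omega
        have hLc : ((range np).filter
            (fun t => ℓ * np ≤ t * n ∧ t * n < ℓ * np + np)).card =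
            if q + 1 < np then 1 else 0 := by
          apply myFilterCard
          intro t ht
          have e1 := hmul t q
          have e2 := hmul (q + 1) t
          have e3 := hmul t (q + 1)
          have e5 := hmul (q + 2) t
          have e4' : (q + 1) * n = q * n + n := by ring
          have e5' : (q + 2) * n = q * n + n + n := by ring
          omega
        rw [hLc, if_pos hq1np, if_pos hcase]
      · -- no candidate: both empty
        have hLc : ((range np).filter
            (fun t => ℓ * np ≤ t * n ∧ t * n < ℓ * np + np)).card =
            if np < np then 1 else 0 := by
          apply myFilterCard
          intro t ht
          have e1 := hmul t q
          have e2 := hmul (q + 1) t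
          have e4' : (q + 1) * n = q * n + n := by ring
          omega
        rw [hLc, if_neg (lt_irrefl np), if_neg hcase]

theorem stmt6 (ℓ m n mp np nm : ℕ) (hℓ : 0 < ℓ) (hℓn : ℓ < n)
    (hm : 0 < m) (hmn : m < n) (hgcd : Nat.gcd m n = 1)
    (hfarey : mp * n = m * np + 1) (hnm : 0 < nm) (hsum : np + nm = n) :
    ⌈(ℓ * np : ℚ) / n⌉ =
      (((Finset.range np).filter (fun i => i * m % n < ℓ)).card : ℤ) := by
  have hn : 0 < n := lt_trans hℓ hℓn
  have hn2 : 1 < n := lt_of_le_of_lt hm hmn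
  have hnp : 0 < np := by
    rcases Nat.eq_zero_or_pos np with rfl | h
    · exfalso
      simp only [Nat.mul_zero, Nat.zero_add] at hfarey
      have h1 : n ∣ 1 := Dvd.intro_left mp hfarey
      have h2 : n ≤ 1 := Nat.le_of_dvd one_pos h1
      omega
    · exact h
  have hnpn : np < n := by omega
  -- mp ≤ m
  have hmulm : m * np + m * nm = m * n := by rw [← Nat.mul_add, hsum]
  have hmpn : mp * n ≤ m * n := by
    have h1 : m * np ≤ m * (n - 1) := Nat.mul_le_mul_left m (by omega)
    have h2 : m * (n - 1) + m = m * n := by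
      cases n with
      | zero => omega
      | succ k => simp [Nat.succ_sub_one, Nat.mul_succ]
    omega
  have hmpm : mp ≤ m := Nat.le_of_mul_le_mul_right hmpn hn
  have hsubmul : (m - mp) * n = m * n - mp * n := Nat.sub_mul _ _ _
  have h6 : m * nm = 1 + (m - mp) * n := by omega
  have hmm1 : m * nm % n = 1 := by
    rw [h6, Nat.add_mul_mod_self_right, Nat.mod_eq_of_lt hn2]
  -- translate the count
  have hcards := myAux m n np nm hnp hnpn hsum hmm1 ℓ (le_of_lt hℓn)
  have hℓnp : 0 < ℓ * np := Nat.mul_pos hℓ hnp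
  obtain ⟨d, r, hdm, hrn, hddef⟩ :
      ∃ d r, d * n + r = ℓ * np - 1 ∧ r < n ∧ d = (ℓ * np - 1) / n :=
    ⟨_, _, by rw [mul_comm]; exact Nat.div_add_mod _ _, Nat.mod_lt _ hn, rfl⟩
  have hflt : (range np).filter (fun t => t * n < ℓ * np) = range (d + 1) := by
    ext t
    simp only [mem_filter, mem_range]
    have h1 : t ≤ d ↔ t * n ≤ ℓ * np - 1 := by
      rw [hddef, Nat.le_div_iff_mul_le hn]
    have h4 : np ≤ t ↔ np * n ≤ t * n :=
      ⟨fun h => Nat.mul_le_mul_right n h, fun h => Nat.le_of_mul_le_mul_right h hn⟩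
    have h5 : np * n = n * np := mul_comm _ _
    have h3 : ℓ * np ≤ n * np := Nat.mul_le_mul_right np (le_of_lt hℓn)
    omega
  rw [hflt, Finset.card_range] at hcards
  rw [← hcards]
  have hnat1 : d * n < ℓ * np := by omega
  have hnat2 : ℓ * np ≤ d * n + n := by omega
  rw [Int.ceil_eq_iff]
  have hnQ : (0 : ℚ) < (n : ℚ) := by exact_mod_cast hn
  constructor
  · rw [lt_div_iff₀ hnQ]
    push_cast
    have h1 : (d : ℚ) * n < (ℓ : ℚ) * np := by exact_mod_cast hnat1
    nlinarith
  · rw [div_le_iff₀ hnQ]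
    push_cast
    have h2 : (ℓ : ℚ) * np ≤ (d : ℚ) * n + n := by exact_mod_cast hnat2
    nlinarith
end

section
/- Let ℓ,m,n with ℓ<n, m<n, gcd(m,n)=1, d the inverse of m mod n, and for k ≥ 1 and integer χ with |χ| < k, set ℓ_k⁺ = kℓ + ⌈ℓn⁺/n⌉ and ℓ̃ = ℓ_k⁺ + χ, where n⁺ is the right Farey root denominator. Then ℓ̃·d_k⁺ mod n_k⁺ = (ℓ·d mod n + χ·n) mod n_k⁺, where n_k⁺ = kn+n⁺ and d_k⁺ = n is the inverse of m_k⁺ = km+m⁺ modulo n_k⁺. -/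
theorem stmt10 (ℓ m n d mp np k : ℕ) (χ : ℤ)
    (hℓ : 0 < ℓ) (hℓn : ℓ < n) (hm : 0 < m) (hmn : m < n) (hgcd : Nat.gcd m n = 1)
    (hd : d < n) (hdinv : m * d % n = 1)
    (hnp : np = n - d) (hfarey : mp * n = m * np + 1)
    (hk : 1 ≤ k) (hχ : χ.natAbs < k) :
    (((k * ℓ : ℤ) + ⌈(ℓ * np : ℚ) / n⌉ + χ) * n) % ((k * n + np : ℕ) : ℤ)
      = (((ℓ * d % n : ℕ) : ℤ) + χ * n) % ((k * n + np : ℕ) : ℤ) := by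
  have hn : 0 < n := lt_trans hm hmn
  set r : ℕ := ℓ * d % n with hr
  have hrn : r < n := Nat.mod_lt _ hn
  have hcop : Nat.Coprime d n := by
    have h1 : Nat.gcd d n ∣ m * d := Dvd.dvd.mul_left (Nat.gcd_dvd_left d n) m
    have h2 : Nat.gcd d n ∣ n := Nat.gcd_dvd_right d n
    have h3 : Nat.gcd d n ∣ m * d % n := (Nat.dvd_mod_iff h2).mpr h1
    rw [hdinv] at h3
    exact Nat.dvd_one.mp h3
  have hr0 : 0 < r := by
    rcases Nat.eq_zero_or_pos r with h0 | h0
    · exfalso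
      have hdvd : n ∣ ℓ * d := Nat.dvd_of_mod_eq_zero h0
      have : n ∣ ℓ := (Nat.Coprime.dvd_of_dvd_mul_right hcop.symm) hdvd
      have := Nat.le_of_dvd hℓ this
      omega
    · exact h0
  have hdm : (n : ℤ) * ((ℓ * d / n : ℕ) : ℤ) + (r : ℤ) = (ℓ : ℤ) * d := by
    rw [hr]
    exact_mod_cast Nat.div_add_mod (ℓ * d) n
  have hnpz : (np : ℤ) = (n : ℤ) - d := by omega
  have hnq : (n : ℚ) ≠ 0 := by positivity
  -- ceiling computation: ⌈ℓ·np/n⌉ = ℓ - ⌊ℓd/n⌋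
  have hc : ⌈(ℓ * np : ℚ) / n⌉ = (ℓ : ℤ) - ((ℓ * d / n : ℕ) : ℤ) := by
    have hZ : (ℓ : ℤ) * np = -(r : ℤ) + ((ℓ : ℤ) - ((ℓ * d / n : ℕ) : ℤ)) * n := by
      linear_combination (ℓ : ℤ) * hnpz + hdm
    have hQ : (ℓ : ℚ) * np = -(r : ℚ) + (((ℓ : ℤ) - ((ℓ * d / n : ℕ) : ℤ) : ℤ) : ℚ) * n := by
      exact_mod_cast congrArg (fun z : ℤ => (z : ℚ)) hZ
    have h1 : ((ℓ : ℚ) * np) / n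
        = -((r : ℚ) / n) + (((ℓ : ℤ) - ((ℓ * d / n : ℕ) : ℤ) : ℤ) : ℚ) := by
      rw [hQ, add_div, neg_div, mul_div_cancel_right₀ _ hnq]
    rw [h1, Int.ceil_add_intCast]
    have h2 : ⌈-((r : ℚ) / n)⌉ = 0 := by
      rw [Int.ceil_eq_zero_iff, Set.mem_Ioc]
      constructor
      · have h3 : (r : ℚ) / n < 1 := by
          rw [div_lt_one (by positivity)]
          exact_mod_cast hrn
        linarith
      · have h4 : 0 ≤ (r : ℚ) / n := by positivity
        linarith
    rw [h2]
    ring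
  rw [hc]
  have hkey : ((k * ℓ : ℤ) + ((ℓ : ℤ) - ((ℓ * d / n : ℕ) : ℤ)) + χ) * n
      = (ℓ : ℤ) * ((k * n + np : ℕ) : ℤ) + ((r : ℤ) + χ * n) := by
    have h5 := hdm
    push_cast at h5 ⊢
    linear_combination (-(ℓ : ℤ)) * hnpz - h5
  rw [hkey, add_comm ((ℓ : ℤ) * _), Int.add_mul_emod_self_right]
end

section
/- Let A be an N×N matrix over a field and u, v column vectors. Then u^T · adj(A + v·u^T) = u^T · adj(A), where adj denotes the adjugate matrix. -/
theorem stmt11 {N : ℕ} {K : Type*} [Field K] (A : Matrix (Fin N) (Fin N) K)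
    (u v : Fin N → K) :
    Matrix.vecMul u (A + Matrix.vecMulVec v u).adjugate
      = Matrix.vecMul u A.adjugate := by
  have key : ∀ (B : Matrix (Fin N) (Fin N) K) (w : Fin N → K),
      Matrix.vecMul w B.adjugate = Matrix.cramer B.transpose w := by
    intro B w
    ext j
    rw [Matrix.cramer_eq_adjugate_mulVec, ← Matrix.adjugate_transpose]
    simp [Matrix.vecMul, Matrix.mulVec, dotProduct, mul_comm]
  rw [key, key]
  ext j
  rw [Matrix.cramer_transpose_apply, Matrix.cramer_transpose_apply]
  refine Matrix.det_eq_of_forall_row_eq_smul_add_const (Function.update v j 0) j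
    (Function.update_self j 0 v) fun i k => ?_
  by_cases h : i = j
  · subst h
    simp [Matrix.updateRow_self]
  · simp [Matrix.updateRow_ne h, Matrix.updateRow_self, Function.update_of_ne h,
      Matrix.vecMulVec_apply, Matrix.add_apply]
end

section
/- Let A be an N×N matrix over ℂ of rank N−1. Then adj(A) = c·v·u^T, where u, v are vectors with u^T·A = 0, A·v = 0, u^T·v = 1, and c is the product of all nonzero eigenvalues of A counted with algebraic multiplicity. Moreover, if rank(A) < N−1, then adj(A) = 0. -/
open Polynomial Matrix Module

section aux

theorem ker_desc {n : ℕ} (A : Matrix (Fin (n+1)) (Fin (n+1)) ℂ)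
    (hr : A.rank = n) (v : Fin (n+1) → ℂ) (hv : A.mulVec v = 0) (hv0 : v ≠ 0) :
    ∀ x, A.mulVec x = 0 → ∃ s : ℂ, x = s • v := by
  have hker : Module.finrank ℂ (LinearMap.ker A.mulVecLin) = 1 := by
    have := LinearMap.finrank_range_add_finrank_ker A.mulVecLin
    rw [show Module.finrank ℂ (LinearMap.range A.mulVecLin) = A.rank from rfl] at this
    simp [hr] at this
    omega
  have hspan : Submodule.span ℂ {v} = LinearMap.ker A.mulVecLin := by
    apply Submodule.eq_of_le_of_finrank_le
    · rw [Submodule.span_le, Set.singleton_subset_iff]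
      simpa [LinearMap.mem_ker] using hv
    · rw [hker, finrank_span_singleton hv0]
  intro x hx
  have : x ∈ Submodule.span ℂ {v} := by
    rw [hspan]; simpa [LinearMap.mem_ker] using hx
  obtain ⟨s, hs⟩ := Submodule.mem_span_singleton.mp this
  exact ⟨s, hs.symm⟩

theorem struct {n : ℕ} (A : Matrix (Fin (n+1)) (Fin (n+1)) ℂ)
    (hr : A.rank = n) (u v : Fin (n+1) → ℂ) (hu : Matrix.vecMul u A = 0) (hv : A.mulVec v = 0)
    (huv : dotProduct u v = 1) :
    ∃ τ : ℂ, A.adjugate = τ • Matrix.vecMulVec v u := by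
  have hv0 : v ≠ 0 := by rintro rfl; simp at huv
  have hu0 : u ≠ 0 := by rintro rfl; simp at huv
  have hdet : A.det = 0 := by
    by_contra hd
    have := Matrix.rank_of_isUnit A ((Matrix.isUnit_iff_isUnit_det A).mpr (isUnit_iff_ne_zero.mpr hd))
    simp [this] at hr
  have hkerA := ker_desc A hr v hv hv0
  have hrT : Aᵀ.rank = n := by rw [Matrix.rank_transpose]; exact hr
  have huT : Aᵀ.mulVec u = 0 := by rw [Matrix.mulVec_transpose]; exact hu
  have hkerAT := ker_desc Aᵀ hrT u huT hu0
  -- rows of adjugate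
  have hAM : A.adjugate * A = 0 := by rw [Matrix.adjugate_mul, hdet]; simp
  have hrow : ∀ i, ∃ s : ℂ, A.adjugate i = s • u := by
    intro i
    apply hkerAT
    funext j
    rw [Matrix.mulVec_transpose]
    have := congrFun (congrFun hAM i) j
    simpa [Matrix.mul_apply, Matrix.vecMul, dotProduct] using this
  choose w hw using hrow
  have hMA : A * A.adjugate = 0 := by rw [Matrix.mul_adjugate, hdet]; simp
  obtain ⟨j₀, hj₀⟩ : ∃ j, u j ≠ 0 := by
    by_contra hc; push_neg at hc; exact hu0 (funext hc)
  have hcol : ∃ s : ℂ, (fun i => A.adjugate i j₀) = s • v := by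
    apply hkerA
    funext k
    have := congrFun (congrFun hMA k) j₀
    simpa [Matrix.mul_apply, Matrix.mulVec, dotProduct] using this
  obtain ⟨s, hs⟩ := hcol
  refine ⟨s / u j₀, ?_⟩
  ext i j
  have h1 : A.adjugate i j = w i * u j := by rw [hw i]; simp
  have h1' : A.adjugate i j₀ = w i * u j₀ := by rw [hw i]; simp
  have h2 : w i * u j₀ = s * v i := by
    have := congrFun hs i
    simpa [h1'] using this
  have h3 : w i = s * v i / u j₀ := by rw [eq_div_iff hj₀]; exact h2
  rw [h1, h3]
  simp [Matrix.vecMulVec_apply, Matrix.smul_apply, smul_eq_mul]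
  field_simp

theorem poly_id {n : ℕ} (A : Matrix (Fin n) (Fin n) ℂ) (u v : Fin n → ℂ)
    (hu : Matrix.vecMul u A = 0) (huv : dotProduct u v = 1) :
    A.charpoly =
      X * (dotProduct (fun i => C (u i))
        ((Matrix.charmatrix A).adjugate.mulVec (fun i => C (v i)))) := by
  set M := Matrix.charmatrix A with hM
  have h1 : M * M.adjugate = A.charpoly • 1 := by
    rw [Matrix.mul_adjugate]; rfl
  have hdot : dotProduct (fun i => C (u i)) (fun i => C (v i)) = 1 := by
    simp only [dotProduct, ← C_mul, ← map_sum]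
    have : ∑ i, u i * v i = 1 := huv
    rw [this, C_1]
  have hij : ∀ i j, M i j = (if i = j then X else 0) - C (A i j) := by
    intro i j
    by_cases h : i = j
    · subst h; rw [hM, Matrix.charmatrix_apply_eq, if_pos rfl]
    · rw [hM, Matrix.charmatrix_apply_ne _ _ _ h, if_neg h, zero_sub]
  have hvecMul : Matrix.vecMul (fun i => C (u i)) M = (X : ℂ[X]) • (fun i => C (u i)) := by
    funext j
    show ∑ i, C (u i) * M i j = X * C (u j)
    simp only [hij, mul_sub]
    rw [Finset.sum_sub_distrib]
    have h2 : ∑ i, C (u i) * C (A i j) = 0 := by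
      simp only [← C_mul, ← map_sum]
      have : ∑ i, u i * A i j = 0 := by
        have := congrFun hu j
        simpa [Matrix.vecMul, dotProduct] using this
      rw [this, C_0]
    rw [h2, sub_zero]
    rw [Finset.sum_congr rfl (fun i _ => by rw [mul_ite, mul_zero])]
    rw [Finset.sum_ite_eq' Finset.univ j (fun i => C (u i) * X)]
    rw [if_pos (Finset.mem_univ j), mul_comm]
  calc A.charpoly
      = dotProduct (fun i => C (u i))
          ((A.charpoly • (1 : Matrix (Fin n) (Fin n) ℂ[X])).mulVec (fun i => C (v i))) := by
        rw [Matrix.smul_mulVec, Matrix.one_mulVec, dotProduct_smul, hdot,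
          smul_eq_mul, mul_one]
    _ = dotProduct (fun i => C (u i)) ((M * M.adjugate).mulVec (fun i => C (v i))) := by
        rw [h1]
    _ = dotProduct (fun i => C (u i)) (M.mulVec (M.adjugate.mulVec (fun i => C (v i)))) := by
        rw [← Matrix.mulVec_mulVec]
    _ = dotProduct (Matrix.vecMul (fun i => C (u i)) M)
          (M.adjugate.mulVec (fun i => C (v i))) := by
        rw [Matrix.dotProduct_mulVec]
    _ = X * _ := by
        rw [hvecMul, smul_dotProduct, smul_eq_mul]

theorem poly_eval {n : ℕ} (A : Matrix (Fin (n+1)) (Fin (n+1)) ℂ) (u v : Fin (n+1) → ℂ) :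
    (dotProduct (fun i => C (u i))
      ((Matrix.charmatrix A).adjugate.mulVec (fun i => C (v i)))).eval 0
    = (-1)^n * dotProduct u (A.adjugate.mulVec v) := by
  set M := Matrix.charmatrix A with hM
  have hmap : (evalRingHom (0:ℂ)).mapMatrix M = -A := by
    ext i j
    by_cases h : i = j
    · subst h
      simp [hM, Matrix.charmatrix_apply_eq]
    · simp [hM, Matrix.charmatrix_apply_ne _ _ _ h]
  have hadj : (evalRingHom (0:ℂ)).mapMatrix M.adjugate = ((-1:ℂ))^n • A.adjugate := by
    rw [RingHom.map_adjugate, hmap]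
    have : (-A) = ((-1:ℂ)) • A := by simp
    rw [this, Matrix.adjugate_smul]
    simp
  have key : ∀ i, ((M.adjugate.mulVec (fun i => C (v i))) i).eval 0
      = (((evalRingHom (0:ℂ)).mapMatrix M.adjugate).mulVec v) i := by
    intro i
    simp only [Matrix.mulVec, dotProduct, eval_finset_sum, RingHom.mapMatrix_apply,
      Matrix.map_apply]
    congr 1
    funext j
    simp [coe_evalRingHom]
  simp only [dotProduct, eval_finset_sum, eval_mul, eval_C]
  rw [Finset.sum_congr rfl (fun i _ => by rw [key i])]
  rw [hadj]
  simp only [Matrix.smul_mulVec, Pi.smul_apply, smul_eq_mul]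
  rw [Finset.mul_sum]
  congr 1
  funext i
  ring

theorem charpoly_mulVecLin {n : ℕ} (A : Matrix (Fin n) (Fin n) ℂ) :
    (A.mulVecLin : Module.End ℂ (Fin n → ℂ)).charpoly = A.charpoly := by
  have h1 := LinearMap.charpoly_toMatrix A.mulVecLin (Pi.basisFun ℂ (Fin n))
  rw [← h1]
  congr 1
  rw [LinearMap.toMatrix_eq_toMatrix', ← Matrix.toLin'_apply' A, LinearMap.toMatrix'_toLin']

theorem trailing {n : ℕ} (A : Matrix (Fin (n+1)) (Fin (n+1)) ℂ)
    (hr : A.rank = n) (u v : Fin (n+1) → ℂ) (hu : Matrix.vecMul u A = 0)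
    (hv : A.mulVec v = 0) (huv : dotProduct u v = 1) :
    A.charpoly.natTrailingDegree = 1 := by
  have hv0 : v ≠ 0 := by rintro rfl; simp at huv
  set φ : Module.End ℂ (Fin (n+1) → ℂ) := A.mulVecLin with hφ
  have hker : Module.finrank ℂ (LinearMap.ker φ) = 1 := by
    have := LinearMap.finrank_range_add_finrank_ker φ
    rw [show Module.finrank ℂ (LinearMap.range φ) = A.rank from rfl] at this
    simp [hr] at this
    omega
  have hvk : v ∈ LinearMap.ker φ := by simpa [hφ, LinearMap.mem_ker] using hv
  have hspan : Submodule.span ℂ {v} = LinearMap.ker φ := by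
    apply Submodule.eq_of_le_of_finrank_le
    · rw [Submodule.span_le, Set.singleton_subset_iff]; exact hvk
    · rw [hker, finrank_span_singleton hv0]
  -- ker ∩ range = ⊥ and ker φ^k ≤ ker φ
  have hdisj : ∀ x, φ x ∈ LinearMap.ker φ → φ x = 0 := by
    intro x hx
    rw [← hspan] at hx
    obtain ⟨s, hs⟩ := Submodule.mem_span_singleton.mp hx
    have h1 : dotProduct u (φ x) = s := by
      rw [← hs]
      simp [dotProduct_smul, huv, mul_comm]
    have h2 : dotProduct u (φ x) = 0 := by
      show dotProduct u (A.mulVec x) = 0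
      rw [Matrix.dotProduct_mulVec, hu, zero_dotProduct]
    rw [← hs, h1.symm.trans h2]
    simp
  have hpow : ∀ k, LinearMap.ker (φ ^ k) ≤ LinearMap.ker φ := by
    intro k
    induction k with
    | zero =>
      intro x hx
      simp [LinearMap.mem_ker, pow_zero, Module.End.one_apply] at hx
      simp [LinearMap.mem_ker, hx]
    | succ k ih =>
      intro x hx
      rw [LinearMap.mem_ker] at hx ⊢
      have : (φ ^ k) (φ x) = 0 := by
        rw [← Module.End.mul_apply, ← pow_succ]; exact hx
      have hφx : φ x ∈ LinearMap.ker φ := ih (LinearMap.mem_ker.mpr this)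
      exact hdisj x hφx
  have hmax : φ.maxGenEigenspace 0 = LinearMap.ker φ := by
    have h0 : φ.maxGenEigenspace 0 = ⨆ (k : ℕ), LinearMap.ker (φ ^ k) := by
      simp [← Module.End.iSup_genEigenspace_eq, Module.End.genEigenspace_nat]
    rw [h0]
    apply le_antisymm
    · exact iSup_le hpow
    · have := le_iSup (fun k => LinearMap.ker (φ ^ k)) 1
      simpa [pow_one] using this
  have := φ.finrank_maxGenEigenspace_zero_eq
  rw [hmax, hker] at this
  rw [← _root_.charpoly_mulVecLin A]
  exact this.symm

theorem part1 {n : ℕ} (A : Matrix (Fin (n+1)) (Fin (n+1)) ℂ)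
    (hr : A.rank = n) (u v : Fin (n+1) → ℂ) (hu : Matrix.vecMul u A = 0)
    (hv : A.mulVec v = 0) (huv : dotProduct u v = 1)
    (struct : ∃ τ : ℂ, A.adjugate = τ • Matrix.vecMulVec v u)
    (hpq : A.charpoly = X * (dotProduct (fun i => C (u i))
        ((Matrix.charmatrix A).adjugate.mulVec (fun i => C (v i)))))
    (htd : A.charpoly.natTrailingDegree = 1)
    (heval : (dotProduct (fun i => C (u i))
      ((Matrix.charmatrix A).adjugate.mulVec (fun i => C (v i)))).eval 0
      = (-1)^n * dotProduct u (A.adjugate.mulVec v)) :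
    A.adjugate = ((A.charpoly.roots.filter (fun z => z ≠ 0)).prod) • Matrix.vecMulVec v u := by
  obtain ⟨τ, hτ⟩ := struct
  set q : ℂ[X] := dotProduct (fun i => C (u i))
      ((Matrix.charmatrix A).adjugate.mulVec (fun i => C (v i))) with hqdef
  set p : ℂ[X] := A.charpoly with hpdef
  have hpmonic : p.Monic := A.charpoly_monic
  have hp0 : p ≠ 0 := hpmonic.ne_zero
  -- τ = u ⬝ᵥ adj A *ᵥ v
  have ht : dotProduct u (A.adjugate.mulVec v) = τ := by
    rw [hτ]
    have h1 : (Matrix.vecMulVec v u).mulVec v = v := by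
      funext i
      simp only [Matrix.mulVec, Matrix.vecMulVec_apply, dotProduct]
      rw [show ∑ j, v i * u j * v j = v i * ∑ j, u j * v j from by
        rw [Finset.mul_sum]; exact Finset.sum_congr rfl fun j _ => by ring]
      have : ∑ j, u j * v j = 1 := huv
      rw [this, mul_one]
    rw [Matrix.smul_mulVec, h1, dotProduct_smul, smul_eq_mul, huv, mul_one]
  -- q.eval 0 ≠ 0
  have hq0ne : q.eval 0 ≠ 0 := by
    have hcoeff : p.coeff 1 = q.coeff 0 := by rw [hpq, coeff_X_mul]
    have htc : p.coeff 1 ≠ 0 := by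
      have := Polynomial.trailingCoeff_eq_zero.not.mpr hp0
      rwa [Polynomial.trailingCoeff, htd] at this
    rw [← coeff_zero_eq_eval_zero, ← hcoeff]
    exact htc
  have hqne : q ≠ 0 := by intro h; rw [h] at hq0ne; simp at hq0ne
  -- splits
  have hpsplits : p.Splits := IsAlgClosed.splits p
  have hqsplits : q.Splits := by
    have hXq : (X : ℂ[X]) * q ≠ 0 := by rw [← hpq]; exact hp0
    exact (((Polynomial.splits_mul (mul_ne_zero_iff.mp hXq).1 (mul_ne_zero_iff.mp hXq).2).mp (hpq ▸ hpsplits)).2)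
  have hqmonic : q.Monic := by
    have := hpmonic
    rw [hpq] at this
    unfold Polynomial.Monic at this ⊢
    rwa [leadingCoeff_mul, leadingCoeff_X, one_mul] at this
  -- roots
  have hroots : p.roots = 0 ::ₘ q.roots := by
    rw [hpq, Polynomial.roots_mul (by rw [← hpq]; exact hp0), Polynomial.roots_X,
      Multiset.singleton_add]
  have h0notin : (0:ℂ) ∉ q.roots := by
    intro hmem
    exact hq0ne ((Polynomial.mem_roots hqne).mp hmem)
  -- the filtered product
  have hfilter : (p.roots.filter (fun z => z ≠ 0)).prod = q.roots.prod := by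
    rw [hroots, Multiset.filter_cons_of_neg _ (by simp)]
    congr 1
    apply Multiset.filter_eq_self.mpr
    intro a ha
    rintro rfl
    exact h0notin ha
  -- q = prod of roots
  have hqprod : q = (q.roots.map fun a => X - C a).prod :=
    hqsplits.eq_prod_roots_of_monic hqmonic
  have hcard : Multiset.card q.roots = n := by
    have hpcard : Multiset.card p.roots = n + 1 := by
      rw [Polynomial.splits_iff_card_roots.mp hpsplits, hpdef, Matrix.charpoly_natDegree_eq_dim]
      simp
    rw [hroots] at hpcard
    simpa using hpcard
  have heval2 : q.eval 0 = (-1)^n * q.roots.prod := by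
    conv_lhs => rw [hqprod]
    rw [Polynomial.eval_multiset_prod]
    rw [Multiset.map_map]
    have : (q.roots.map fun a => Polynomial.eval 0 (X - C a)) = q.roots.map Neg.neg := by
      apply Multiset.map_congr rfl
      intro a _
      simp
    rw [Function.comp_def]  -- might not be needed
    rw [this, Multiset.prod_map_neg, hcard]
  -- conclude τ = prod
  have hτval : τ = q.roots.prod := by
    have h2 := heval
    rw [heval2, ht] at h2
    have hne : ((-1:ℂ))^n ≠ 0 := by
      apply pow_ne_zero; norm_num
    exact (mul_left_cancel₀ hne h2).symm
  rw [hτ, hτval, ← hfilter]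

theorem part2 {N : ℕ} (A : Matrix (Fin N) (Fin N) ℂ) (h : A.rank < N - 1) : A.adjugate = 0 := by
  match N, A, h with
  | 0, A, h => simp at h
  | 1, A, h => simp at h
  | (n+2), A, h =>
    ext i j
    rw [Matrix.adjugate_fin_succ_eq_det_submatrix]
    have he : A.submatrix j.succAbove i.succAbove =
        ((1 : Matrix (Fin (n+2)) (Fin (n+2)) ℂ).submatrix j.succAbove (Equiv.refl _)) * A
          * ((1 : Matrix (Fin (n+2)) (Fin (n+2)) ℂ).submatrix (Equiv.refl _) i.succAbove) := by
      rw [Matrix.one_submatrix_mul, Matrix.mul_submatrix_one]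
      simp
    have hrank : (A.submatrix j.succAbove i.succAbove).rank < n + 1 := by
      calc (A.submatrix j.succAbove i.succAbove).rank
          ≤ A.rank := by
            rw [he]
            exact le_trans (Matrix.rank_mul_le_left _ _) (Matrix.rank_mul_le_right _ _)
        _ < n + 1 := by omega
    have h2 : ¬ IsUnit (A.submatrix j.succAbove i.succAbove).det := by
      intro hu
      have := Matrix.rank_of_isUnit _ ((Matrix.isUnit_iff_isUnit_det _).mpr hu)
      simp [this] at hrank
    have : (A.submatrix j.succAbove i.succAbove).det = 0 := by
      by_contra hd; exact h2 (isUnit_iff_ne_zero.mpr hd)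
    simp [this]

end aux

theorem stmt12 {N : ℕ} (A : Matrix (Fin N) (Fin N) ℂ) :
    (A.rank = N - 1 →
      ∀ u v : Fin N → ℂ,
        Matrix.vecMul u A = 0 → A.mulVec v = 0 → dotProduct u v = 1 →
        A.adjugate =
          ((A.charpoly.roots.filter (fun z => z ≠ 0)).prod) • Matrix.vecMulVec v u) ∧
    (A.rank < N - 1 → A.adjugate = 0) := by
  constructor
  · intro hrank u v hu hv huv
    match N, A, hrank, u, v, hu, hv, huv with
    | 0, A, hrank, u, v, hu, hv, huv =>
      ext i j
      exact i.elim0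
    | (n+1), A, hrank, u, v, hu, hv, huv =>
      have hr : A.rank = n := by simpa using hrank
      exact part1 A hr u v hu hv huv (struct A hr u v hu hv huv) (poly_id A u v hu huv)
        (trailing A hr u v hu hv huv) (poly_eval A u v)
  · exact part2 A
end

section
/- Let A_L, A_R be N×N matrices with A_R = A_L + C·e₁^T, let S be a word of length n, M_S the corresponding product, P_S = I + A_{S_{n−1}} + A_{S_{n−1}}A_{S_{n−2}} + ⋯ + A_{S_{n−1}}⋯A_{S_1}, and ϱ^T = e₁^T·adj(I − A_L). Then e₁^T·adj(I − M_S)·P_S = det(P_S)·ϱ^T. -/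
open Matrix in
lemma aux_mul_vecMulVec {N : ℕ} {K : Type*} [CommRing K]
    (M : Matrix (Fin N) (Fin N) K) (u v : Fin N → K) :
    M * Matrix.vecMulVec u v = Matrix.vecMulVec (Matrix.mulVec M u) v := by
  ext i k
  simp [Matrix.mul_apply, Matrix.vecMulVec_apply, Matrix.mulVec, dotProduct,
    Finset.sum_mul, mul_assoc]

open Matrix in
lemma aux_adj_row {N : ℕ} {K : Type*} [Field K] (i0 : Fin N)
    (B : Matrix (Fin N) (Fin N) K) (u : Fin N → K) :
    Matrix.vecMul (Pi.single i0 1) (B + Matrix.vecMulVec u (Pi.single i0 1)).adjugate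
      = Matrix.vecMul (Pi.single i0 1) B.adjugate := by
  funext j
  have hv : ∀ (X : Matrix (Fin N) (Fin N) K),
      Matrix.vecMul (Pi.single i0 (1:K)) X j = X i0 j := by
    intro X
    simp [Matrix.vecMul, dotProduct, Pi.single_apply]
  rw [hv, hv, Matrix.adjugate_apply, Matrix.adjugate_apply]
  set u' : Fin N → K := Function.update u j 0 with hu'
  have hsplit : (B + Matrix.vecMulVec u (Pi.single i0 1)).updateRow j (Pi.single i0 1)
      = (B.updateRow j (Pi.single i0 1)).updateCol i0
          ((fun i => B.updateRow j (Pi.single i0 1) i i0) + u') := by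
    ext i k
    by_cases hij : i = j <;> by_cases hk : k = i0 <;>
      simp [Matrix.updateRow_apply, Matrix.updateCol_apply, Matrix.vecMulVec_apply,
        hij, hk, hu', Function.update, Pi.single_apply]
  rw [hsplit, Matrix.det_updateCol_add]
  rw [Matrix.updateCol_eq_self]
  have hz : ((B.updateRow j (Pi.single i0 1)).updateCol i0 u').det = 0 := by
    apply Matrix.det_eq_zero_of_row_eq_zero j
    intro k
    by_cases hk : k = i0 <;>
      simp [Matrix.updateCol_apply, Matrix.updateRow_apply, hk, hu', Pi.single_apply]
  rw [hz, add_zero]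

theorem stmt16 {N n : ℕ} {K : Type*} [Field K] (hN : 0 < N) (hn : 0 < n)
    (AL AR : Matrix (Fin N) (Fin N) K) (C e1 : Fin N → K)
    (he1 : e1 = Pi.single ⟨0, hN⟩ 1)
    (hAR : AR = AL + Matrix.vecMulVec C e1)
    (S : ℕ → Bool)
    (A : Bool → Matrix (Fin N) (Fin N) K)
    (hA : A = fun b => if b then AR else AL)
    (M P : Matrix (Fin N) (Fin N) K)
    (hM : M = (((List.range n).map (fun j => A (S j))).reverse).prod)
    (hP : P = ∑ j ∈ Finset.range n, (((List.range j).map (fun t => A (S (n - 1 - t)))).prod)) :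
    Matrix.vecMul (Matrix.vecMul e1 (1 - M).adjugate) P
      = P.det • Matrix.vecMul e1 (1 - AL).adjugate := by
  set i0 : Fin N := ⟨0, hN⟩ with hi0
  set f : ℕ → Matrix (Fin N) (Fin N) K :=
    fun j => ((List.range j).map (fun t => A (S (n - 1 - t)))).prod with hf
  have hf0 : f 0 = 1 := by simp [hf]
  have hfsucc : ∀ j, f (j + 1) = f j * A (S (n - 1 - j)) := by
    intro j
    simp [hf, List.range_succ]
  have hfM : f n = M := by
    rw [hM]
    congr 1
    rw [← List.map_reverse, List.range_eq_range', List.reverse_range', List.map_map]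
    simp only [Nat.zero_add]
    rfl
  set w : Fin N → K := ∑ j ∈ Finset.range n, (if S (n - 1 - j) then Matrix.mulVec (f j) C else 0) with hw
  have key : P * (1 - AL) = (1 - M) + Matrix.vecMulVec w e1 := by
    have h1 : ∀ j, f j * (1 - AL)
        = (f j - f (j + 1)) + (if S (n - 1 - j) then Matrix.vecMulVec (Matrix.mulVec (f j) C) e1 else 0) := by
      intro j
      rcases Bool.dichotomy (S (n - 1 - j)) with hb | hb
      · have : A (S (n - 1 - j)) = AL := by rw [hA, hb]; simp
        rw [hfsucc j, this, hb]
        simp [Matrix.mul_sub, Matrix.mul_one]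
      · have : A (S (n - 1 - j)) = AL + Matrix.vecMulVec C e1 := by rw [hA, hb]; simp [hAR]
        rw [hfsucc j, this, hb]
        simp only [if_true, Matrix.mul_add, aux_mul_vecMulVec, Matrix.mul_sub, Matrix.mul_one]
        abel
    have hPsum : P * (1 - AL) = ∑ j ∈ Finset.range n, f j * (1 - AL) := by
      rw [hP, Finset.sum_mul]
    rw [hPsum]
    have := fun j => h1 j
    rw [Finset.sum_congr rfl (fun j _ => h1 j), Finset.sum_add_distrib,
      Finset.sum_range_sub' f, hf0, hfM]
    congr 1
    have hlin : Matrix.vecMulVec w e1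
        = ∑ j ∈ Finset.range n, Matrix.vecMulVec (if S (n - 1 - j) then Matrix.mulVec (f j) C else 0) e1 := by
      ext i k
      simp [hw, Matrix.vecMulVec_apply, Matrix.sum_apply, Finset.sum_apply, Finset.sum_mul]
    rw [hlin]
    refine Finset.sum_congr rfl fun j _ => ?_
    by_cases hb : S (n - 1 - j)
    · simp [hb]
    · ext i k
      simp [hb, Matrix.vecMulVec_apply]
  have h2 : Matrix.vecMul e1 (1 - M).adjugate
      = Matrix.vecMul (Matrix.vecMul e1 (1 - AL).adjugate) P.adjugate := by
    calc Matrix.vecMul e1 (1 - M).adjugate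
        = Matrix.vecMul e1 ((1 - M) + Matrix.vecMulVec w e1).adjugate := by
          rw [he1, aux_adj_row]
      _ = Matrix.vecMul e1 (P * (1 - AL)).adjugate := by rw [← key]
      _ = Matrix.vecMul e1 ((1 - AL).adjugate * P.adjugate) := by
          rw [Matrix.adjugate_mul_distrib]
      _ = Matrix.vecMul (Matrix.vecMul e1 (1 - AL).adjugate) P.adjugate := by
          rw [Matrix.vecMul_vecMul]
  rw [h2, Matrix.vecMul_vecMul _ P.adjugate P, Matrix.adjugate_mul]
  funext k
  simp [Matrix.vecMul, dotProduct, Matrix.smul_apply, Matrix.one_apply, mul_ite,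
    Finset.sum_ite_eq, mul_comm]
end

section
/- Let ℓ,m,n with 2 ≤ ℓ ≤ n−2, m<n, gcd(m,n)=1, d the inverse of m mod n, and S = F[ℓ,m,n]. Define the subwords X = S_0⋯S_{(ℓd−1) mod n} (first ℓd mod n symbols), Y = the remaining symbols of S, X̂ = S_0⋯S_{(−d−1) mod n} (first (n−d) symbols), and X^{\overline{0}} = the first ℓd mod n symbols of the word S^{(−d)} with its index-0 symbol flipped appropriately (equivalently, X with its 0th symbol flipped). Then the concatenation X·X̌ = X̂·X^{\overline{0}}, where X̌ = S_{ℓd mod n}⋯S_{((ℓ−1)d−1) mod n} consists of the symbols of S in cyclic order from index ℓd mod n to index (ℓ−1)d−1 mod n. -/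
theorem stmt17 (ℓ m n d : ℕ) (hℓ : 2 ≤ ℓ) (hℓn : ℓ + 2 ≤ n) (hmn : m < n)
    (hgcd : Nat.gcd m n = 1) (hd : d < n) (hd0 : 0 < d) (hdinv : m * d % n = 1) :
    ∀ i, i < ℓ * d % n + (n - d) →
      (if i < ℓ * d % n then Fword ℓ m n i
        else Fword ℓ m n ((ℓ * d + (i - ℓ * d % n)) % n))
      =
      (if i < n - d then Fword ℓ m n i
        else if i - (n - d) = 0 then !(Fword ℓ m n 0)
        else Fword ℓ m n (i - (n - d))) := by
  intro i hi
  have hn : 0 < n := by omega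
  have hkn : ℓ * d % n < n := Nat.mod_lt _ hn
  have hi2 : i < 2 * n := by omega
  have modsmall : ∀ x : ℕ, x < 2 * n → x % n = x ∨ (n ≤ x ∧ x % n = x - n) := by
    intro x hx
    rcases Nat.lt_or_ge x n with h | h
    · exact Or.inl (Nat.mod_eq_of_lt h)
    · exact Or.inr ⟨h, by rw [Nat.mod_eq_sub_mod h]; exact Nat.mod_eq_of_lt (by omega)⟩
  have fcong : ∀ a b : ℕ, a % n = b % n → Fword ℓ m n a = Fword ℓ m n b := by
    intro a b h
    simp only [Fword]
    rw [Nat.mul_mod a, h, ← Nat.mul_mod]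
  have hdm : d * m % n = 1 := by rwa [Nat.mul_comm]
  -- LHS always equals Fword i
  have hLHS : (if i < ℓ * d % n then Fword ℓ m n i
      else Fword ℓ m n ((ℓ * d + (i - ℓ * d % n)) % n)) = Fword ℓ m n i := by
    split
    · rfl
    · rename_i h
      push_neg at h
      apply fcong
      have h1 : ℓ * d + (i - ℓ * d % n) = n * (ℓ * d / n) + i := by
        have := Nat.div_add_mod (ℓ * d) n
        omega
      rw [Nat.mod_mod, h1, Nat.mul_add_mod]
  rw [hLHS]
  split
  · rfl
  · rename_i h1
    push_neg at h1
    split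
    · -- i = n - d
      rename_i h2
      have hieq : i = n - d := by omega
      subst hieq
      -- (n-d)*m % n = n-1
      have hs : (n - d) * m % n = n - 1 := by
        have e1 : (n - d) * m + d * m = n * m := by
          rw [← Nat.add_mul]
          congr 1
          omega
        have e2 : ((n - d) * m % n + d * m % n) % n = 0 := by
          rw [← Nat.add_mod, e1, Nat.mul_mod_right]
        rw [hdm] at e2
        have hlt : (n - d) * m % n < n := Nat.mod_lt _ hn
        rcases modsmall ((n - d) * m % n + 1) (by omega) with h | ⟨h, h'⟩ <;> omega
      have h0 : (0 : ℕ) * m % n = 0 := by simp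
      simp only [Fword, hs, h0]
      rw [decide_eq_true (show 0 < ℓ by omega)]
      simp only [Bool.not_true]
      rw [decide_eq_false (by omega)]
    · -- i > n - d : need Fword i = Fword (i - (n-d))
      rename_i h2
      set r := i * m % n with hrdef
      have hr : r < n := Nat.mod_lt _ hn
      -- i % n = r * d % n
      have hinv : i % n = r * d % n := by
        rw [hrdef, Nat.mod_mul_mod, Nat.mul_assoc, Nat.mul_mod i (m * d) n, hdinv,
          Nat.mul_one, Nat.mod_mod]
      -- r ≠ n - 1
      have hr1 : r ≠ n - 1 := by
        intro h
        have e1 : r * d + d = n * d := by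
          rw [h, ← Nat.succ_mul]
          congr 1
          omega
        have e2 : (r * d % n + d) % n = 0 := by
          rw [Nat.mod_add_mod, e1, Nat.mul_mod_right]
        have hu : r * d % n < n := Nat.mod_lt _ hn
        have hund : r * d % n = n - d := by
          rcases modsmall (r * d % n + d) (by omega) with h' | ⟨h', h''⟩ <;> omega
        rcases modsmall i hi2 with h' | ⟨h', h''⟩ <;> omega
      -- r ≠ ℓ - 1
      have hr2 : r ≠ ℓ - 1 := by
        intro h
        have e1 : r * d + d = ℓ * d := by
          rw [h, ← Nat.succ_mul]
          congr 1
          omega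
        have e2 : (r * d % n + d) % n = ℓ * d % n := by
          rw [Nat.mod_add_mod, e1]
        have hu : r * d % n < n := Nat.mod_lt _ hn
        rcases modsmall (r * d % n + d) (by omega) with h' | ⟨h', h''⟩ <;>
          rcases modsmall i hi2 with g' | ⟨g', g''⟩ <;> omega
      -- Fword (i - (n - d)) = Fword (i + d)
      have hj : Fword ℓ m n (i - (n - d)) = Fword ℓ m n (i + d) := by
        apply fcong
        have : i + d = (i - (n - d)) + n := by omega
        rw [this, Nat.add_mod_right]
      rw [hj]
      -- (i + d) * m % n = (r + 1) % n = r + 1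
      have hidm : (i + d) * m % n = r + 1 := by
        rw [Nat.add_mul, Nat.add_mod, hdm, ← hrdef]
        exact Nat.mod_eq_of_lt (by omega)
      simp only [Fword, hidm, ← hrdef, decide_eq_decide]
      omega
end

section
/- Let ℓ,m,n with ℓ<n, m<n, gcd(m,n)=1, let S = F[ℓ,m,n], and for k ≥ 1 let m_k⁺ = km+m⁺, n_k⁺ = kn+n⁺, ℓ_k⁺ = kℓ+⌈ℓn⁺/n⌉, where m⁺/n⁺ is the right Farey root of m/n. Then the rotational word F[ℓ_k⁺, m_k⁺, n_k⁺] of length n_k⁺ equals the concatenation S^k · X̂, where S^k is k copies of S and X̂ = S_0⋯S_{n−d−1} is the first n−d symbols of S (d the inverse of m mod n). -/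
theorem stmt19 (ℓ m n d mp np ℓk k : ℕ)
    (hℓ : 0 < ℓ) (hℓn : ℓ < n) (hm : 0 < m) (hmn : m < n) (hgcd : Nat.gcd m n = 1)
    (hd : d < n) (hd0 : 0 < d) (hdinv : m * d % n = 1)
    (hnp : np = n - d) (hfarey : mp * n = m * np + 1)
    (hk : 1 ≤ k)
    (hℓk : (ℓk : ℤ) = k * ℓ + ⌈(ℓ * np : ℚ) / n⌉) :
    ∀ i, i < k * n + np →
      Fword ℓk (k * m + mp) (k * n + np) i =
        (if i < k * n then Fword ℓ m n (i % n) else Fword ℓ m n (i - k * n)) := by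
  have hn : 0 < n := by omega
  have hnp0 : 0 < np := by omega
  have hnpn : np < n := by omega
  -- gcd d n = 1
  have hcd : Nat.gcd d n = 1 := by
    have h1 : n * (m * d / n) + 1 = m * d := by
      have := Nat.div_add_mod (m * d) n; omega
    have hg1 : Nat.gcd d n ∣ m * d := (Nat.gcd_dvd_left d n).mul_left m
    have hg2 : Nat.gcd d n ∣ n * (m * d / n) := (Nat.gcd_dvd_right d n).mul_right _
    have h2 : Nat.gcd d n ∣ 1 := by
      have h3 := Nat.dvd_sub hg1 hg2
      have h4 : m * d - n * (m * d / n) = 1 := by omega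
      rwa [h4] at h3
    exact Nat.dvd_one.mp h2
  have hcnp : Nat.gcd np n = 1 := by
    have h1 : Nat.gcd np n ∣ d := by
      have h2 := Nat.dvd_sub (Nat.gcd_dvd_right np n) (Nat.gcd_dvd_left np n)
      have h3 : n - np = d := by omega
      rwa [h3] at h2
    have h4 : Nat.gcd np n ∣ Nat.gcd d n := Nat.dvd_gcd h1 (Nat.gcd_dvd_right np n)
    rw [hcd] at h4
    exact Nat.dvd_one.mp h4
  have hndvd : ¬ n ∣ ℓ * np := by
    intro h
    have hc : Nat.Coprime n np := Nat.coprime_comm.mp hcnp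
    have h2 : n ∣ ℓ := hc.dvd_of_dvd_mul_right h
    have := Nat.le_of_dvd hℓ h2
    omega
  -- v, w
  set v := ℓ * np / n with hv
  set w := ℓ * np % n with hw
  have hvw : n * v + w = ℓ * np := Nat.div_add_mod _ _
  have hw1 : 1 ≤ w := by
    rcases Nat.eq_zero_or_pos w with h | h
    · exact absurd (Nat.dvd_of_mod_eq_zero h) hndvd
    · exact h
  have hwn : w < n := Nat.mod_lt _ hn
  -- value of ℓk
  have hceil : ⌈(ℓ * np : ℚ) / n⌉ = (v : ℤ) + 1 := by
    rw [Int.ceil_eq_iff]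
    constructor
    · rw [lt_div_iff₀ (by positivity : (0:ℚ) < (n:ℚ))]
      have k1 : n * v < ℓ * np := by linarith
      have k1' : ((n * v : ℕ) : ℚ) < ((ℓ * np : ℕ) : ℚ) := by exact_mod_cast k1
      push_cast at k1' ⊢
      linarith
    · rw [div_le_iff₀ (by positivity : (0:ℚ) < (n:ℚ))]
      have k2 : ℓ * np ≤ n * v + n := by linarith
      have k2' : ((ℓ * np : ℕ) : ℚ) ≤ ((n * v + n : ℕ) : ℚ) := by exact_mod_cast k2
      push_cast at k2' ⊢
      linarith
  have hℓkv : ℓk = k * ℓ + v + 1 := by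
    rw [hceil] at hℓk
    exact_mod_cast hℓk
  intro i hi
  set q := i / n with hq
  set r := i % n with hr
  set t := r * m % n with ht
  set s := r * m / n with hs
  have hqr : n * q + r = i := Nat.div_add_mod i n
  have hrn : r < n := Nat.mod_lt _ hn
  have hst : n * s + t = r * m := Nat.div_add_mod _ _
  have htn : t < n := Nat.mod_lt _ hn
  -- u with n*u = r + t*np
  have H2 : (n:ℤ) * s + t = (r:ℤ) * m := by exact_mod_cast hst
  have H4 : (mp:ℤ) * n = (m:ℤ) * np + 1 := by exact_mod_cast hfarey
  have hdvdu : (n:ℤ) ∣ ((r + t * np : ℕ) : ℤ) := by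
    refine ⟨(r:ℤ) * mp - (s:ℤ) * np, ?_⟩
    push_cast
    linear_combination (np:ℤ) * H2 - (r:ℤ) * H4
  have hdvdu' : n ∣ r + t * np := Int.ofNat_dvd.mp hdvdu
  obtain ⟨u, hu⟩ := hdvdu'
  have H1 : (n:ℤ) * q + r = i := by exact_mod_cast hqr
  have H3 : (r:ℤ) + t * np = (n:ℤ) * u := by exact_mod_cast hu
  have hqk : q ≤ k := by
    by_contra hcon
    push_neg at hcon
    have h2 : n * k + n ≤ n * q := by
      calc n * k + n = n * (k+1) := by ring
        _ ≤ n * q := Nat.mul_le_mul (le_refl n) (by omega)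
    linarith
  -- the exact division identity
  have hiM : i * (k*m + mp) = (q + k*t + u) + (q*m + s) * (k*n + np) := by
    have hZ : (n:ℤ) * ((i:ℤ) * ((k:ℤ)*m + mp))
        = (n:ℤ) * (((q:ℤ) + (k:ℤ)*t + u) + ((q:ℤ)*m + s) * ((k:ℤ)*n + np)) := by
      linear_combination (-(n:ℤ) * ((k:ℤ)*m + mp)) * H1 + ((n:ℤ)*q + r) * H4 + H3
        - ((n:ℤ)*k + np) * H2
    apply Nat.eq_of_mul_eq_mul_left hn
    exact_mod_cast hZ
  -- bound
  have hgN : q + k*t + u < k*n + np := by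
    have hkt : k*t + k ≤ k*n := by
      calc k*t + k = k*(t+1) := by ring
        _ ≤ k*n := Nat.mul_le_mul (le_refl k) (by omega)
    have h3 : t*np + np ≤ n*np := by
      calc t*np + np = (t+1)*np := by ring
        _ ≤ n*np := Nat.mul_le_mul (by omega) (le_refl np)
    rcases eq_or_lt_of_le hqk with hqe | hql
    · have hqr' : n*k + r = i := hqe ▸ hqr
      have hrnp : r < np := by linarith
      have h4 : n*u < n*np := by linarith
      have h5 : u < np := Nat.lt_of_mul_lt_mul_left h4
      rw [hqe]
      linarith
    · have h4 : n*u < n*(np+1) := by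
        have e : n*(np+1) = n*np + n := by ring
        linarith
      have h5 : u < np + 1 := Nat.lt_of_mul_lt_mul_left h4
      linarith
  have hmod : i * (k*m + mp) % (k*n + np) = q + k*t + u := by
    rw [hiM, Nat.add_mul_mod_self_right, Nat.mod_eq_of_lt hgN]
  -- main equivalence
  have hiff : (q + k*t + u < ℓk) ↔ (t < ℓ) := by
    rw [hℓkv]
    constructor
    · intro hlt
      by_contra hcon
      push_neg at hcon
      rcases eq_or_lt_of_le hcon with hte | htl
      · -- ℓ = t
        have e1 : ℓ * np = t * np := by rw [hte]
        have e2 : k * ℓ = k * t := by rw [hte]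
        have h3 : n*v < n*u := by linarith
        have h5 : v < u := Nat.lt_of_mul_lt_mul_left h3
        linarith
      · have h3 : ℓ*np + np ≤ t*np := by
          calc ℓ*np + np = (ℓ+1)*np := by ring
            _ ≤ t*np := Nat.mul_le_mul (by omega) (le_refl np)
        have h4 : n*v < n*u := by linarith
        have h5 : v < u := Nat.lt_of_mul_lt_mul_left h4
        have h6 : k*ℓ + k ≤ k*t := by
          calc k*ℓ + k = k*(ℓ+1) := by ring
            _ ≤ k*t := Nat.mul_le_mul (le_refl k) (by omega)
        linarith
    · intro hlt
      have h6 : k*t + k ≤ k*ℓ := by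
        calc k*t + k = k*(t+1) := by ring
          _ ≤ k*ℓ := Nat.mul_le_mul (le_refl k) (by omega)
      have h3 : t*np + np ≤ ℓ*np := by
        calc t*np + np = (t+1)*np := by ring
          _ ≤ ℓ*np := Nat.mul_le_mul (by omega) (le_refl np)
      rcases eq_or_lt_of_le hqk with hqe | hql
      · have hqr' : n*k + r = i := hqe ▸ hqr
        have hrnp : r < np := by linarith
        have h4 : n*u < n*(v+1) := by
          have e : n*(v+1) = n*v + n := by ring
          linarith
        have h5 : u < v + 1 := Nat.lt_of_mul_lt_mul_left h4
        rw [hqe]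
        linarith
      · have h4 : n*u < n*(v+2) := by
          have e : n*(v+2) = n*v + 2*n := by ring
          linarith
        have h5 : u < v + 2 := Nat.lt_of_mul_lt_mul_left h4
        linarith
  -- finish
  have hrhs : (if i < k * n then Fword ℓ m n (i % n) else Fword ℓ m n (i - k * n))
      = Fword ℓ m n r := by
    split
    · rfl
    · next h =>
      push_neg at h
      congr 1
      have e1 : (i - k*n + k*n) % n = (i - k*n) % n := Nat.add_mul_mod_self_right _ k n
      have e2 : i - k*n + k*n = i := by omega
      rw [e2] at e1
      rw [hr, e1, Nat.mod_eq_of_lt (show i - k*n < n by omega)]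
  rw [hrhs]
  simp only [Fword, ← hr, ← ht, hmod, decide_eq_decide]
  exact hiff
end
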